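/- Let F be a field, V a finite-dimensional F-vector space, q : V → F a non-degenerate isotropic quadratic form and a ∈ F. Then diam(G_{q,a}) ≤ diam(G_{H,a}) in ℕ∪{∞}, where H is the hyperbolic plane on F². -/

import Mathlib

open QuadraticMap Module

/-- The representation graph `G_{q,a}`: vertices are the vectors of `V`, and distinct
`x, y` are adjacent iff `q (x - y) = a`. -/
def repGraph {F V : Type*} [Field F] [AddCommGroup V] [Module F V]
    (q : QuadraticForm F V) (a : F) : SimpleGraph V where
  Adj x y := x ≠ y ∧ q (x - y) = a
  symm := by
    constructor
    rintro x y ⟨hxy, h⟩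
    refine ⟨hxy.symm, ?_⟩
    rw [← neg_sub x y, QuadraticMap.map_neg]
    exact h
  loopless := by constructor; rintro x ⟨h, -⟩; exact h rfl

/-- The hyperbolic plane `H` on `F²`, i.e. the quadratic form `(x, y) ↦ x * y`. -/
noncomputable def hypPlane (F : Type*) [Field F] : QuadraticForm F (F × F) :=
  LinearMap.BilinMap.toQuadraticMap
    ((LinearMap.mul F F).compl₁₂ (LinearMap.fst F F F) (LinearMap.snd F F F))

theorem hypPlane_apply (F : Type*) [Field F] (v : F × F) : hypPlane F v = v.1 * v.2 := rfl

section Aux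

variable {F V : Type*} [Field F] [AddCommGroup V] [Module F V]

lemma aux_qadd (q : QuadraticForm F V) (x y : V) :
    q (x + y) = q x + q y + polar (⇑q) x y := QuadraticMap.map_add ⇑q x y

lemma aux_qsmul (q : QuadraticForm F V) (c : F) (x : V) :
    q (c • x) = c * c * q x := by
  rw [QuadraticMap.map_smul]; simp [smul_eq_mul]

lemma aux_qsub (q : QuadraticForm F V) (x y : V) :
    q (x - y) = q x + q y - polar (⇑q) x y := by
  rw [sub_eq_add_neg, aux_qadd, QuadraticMap.map_neg, polar_neg_right]; ring

lemma aux_polar_self (q : QuadraticForm F V) (x : V) :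
    polar (⇑q) x x = 2 * q x := by rw [polar_self]; simp

lemma aux_psl (q : QuadraticForm F V) (c : F) (x y : V) :
    polar (⇑q) (c • x) y = c * polar (⇑q) x y := by
  rw [polar_smul_left]; simp [smul_eq_mul]

lemma aux_psr (q : QuadraticForm F V) (c : F) (x y : V) :
    polar (⇑q) x (c • y) = c * polar (⇑q) x y := by
  rw [polar_smul_right]; simp [smul_eq_mul]

/-- Every nonzero vector of a nondegenerate isotropic quadratic space lies in a
hyperbolic plane, in normalized position. -/
lemma exists_hyp_pair (q : QuadraticForm F V)
    (hnd : ∀ x : V, (∀ y : V, polar (⇑q) x y = 0) → x = 0)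
    (hiso : ∃ v : V, v ≠ 0 ∧ q v = 0) {v : V} (hv : v ≠ 0) :
    ∃ e f : V, q e = 0 ∧ q f = 0 ∧ polar (⇑q) e f = 1 ∧ v = q v • e + f := by
  have wit : ∀ w : V, w ≠ 0 → ∃ z, polar (⇑q) w z ≠ 0 := by
    intro w hw
    by_contra h
    push_neg at h
    exact hw (hnd w h)
  -- Step 1 : a hyperbolic pair u, f
  obtain ⟨u, hu, hqu⟩ := hiso
  obtain ⟨z0, hz0⟩ := wit u hu
  obtain ⟨f0, hpf0⟩ : ∃ f0, polar (⇑q) u f0 = 1 :=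
    ⟨(polar (⇑q) u z0)⁻¹ • z0, by rw [aux_psr, inv_mul_cancel₀ hz0]⟩
  obtain ⟨f, hqf, hpuf⟩ : ∃ f, q f = 0 ∧ polar (⇑q) u f = 1 := by
    refine ⟨f0 - q f0 • u, ?_, ?_⟩
    · rw [aux_qsub q f0 (q f0 • u), aux_qsmul, aux_psr, polar_comm (⇑q) f0 u, hpf0, hqu]; ring
    · rw [polar_sub_right, aux_psr, aux_polar_self, hpf0, hqu]; ring
  -- Step 2 : an isotropic vector e₀ not orthogonal to v
  obtain ⟨e₀, hqe₀, hpe₀⟩ : ∃ e₀, q e₀ = 0 ∧ polar (⇑q) e₀ v ≠ 0 := by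
    by_cases h1 : polar (⇑q) u v = 0
    swap
    · exact ⟨u, hqu, h1⟩
    by_cases h2 : polar (⇑q) f v = 0
    swap
    · exact ⟨f, hqf, h2⟩
    have h1' : polar (⇑q) v u = 0 := by rw [polar_comm]; exact h1
    have h2' : polar (⇑q) v f = 0 := by rw [polar_comm]; exact h2
    obtain ⟨z2, hzv0⟩ := wit v hv
    have hzv : polar (⇑q) z2 v ≠ 0 := by rw [polar_comm]; exact hzv0
    obtain ⟨z', hz'u, hz'f, hz'v⟩ :
        ∃ z', polar (⇑q) z' u = 0 ∧ polar (⇑q) z' f = 0 ∧ polar (⇑q) z' v ≠ 0 := by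
      refine ⟨z2 - polar (⇑q) f z2 • u - polar (⇑q) u z2 • f, ?_, ?_, ?_⟩ <;>
        rw [polar_sub_left, polar_sub_left, aux_psl, aux_psl]
      · rw [aux_polar_self, hqu, polar_comm (⇑q) f u, hpuf, polar_comm (⇑q) z2 u]; ring
      · rw [aux_polar_self, hqf, hpuf, polar_comm (⇑q) z2 f]; ring
      · simp only [h1, h1', h2, h2', mul_zero, sub_zero]
        exact hzv
    refine ⟨z' + u - q z' • f, ?_, ?_⟩
    · rw [aux_qsub q (z' + u) (q z' • f), aux_qadd q z' u, aux_qsmul, polar_add_left,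
        aux_psr, aux_psr, hqu, hqf, hpuf, hz'f, hz'u]
      ring
    · rw [polar_sub_left, polar_add_left, aux_psl]
      simp only [h1, h2, mul_zero, sub_zero, add_zero]
      exact hz'v
  -- Step 3 : normalize
  obtain ⟨e₁, hqe₁, hpe₁v⟩ : ∃ e₁, q e₁ = 0 ∧ polar (⇑q) e₁ v = 1 := by
    refine ⟨(polar (⇑q) e₀ v)⁻¹ • e₀, ?_, ?_⟩
    · rw [aux_qsmul, hqe₀]; ring
    · rw [aux_psl, inv_mul_cancel₀ hpe₀]
  refine ⟨e₁, v - q v • e₁, hqe₁, ?_, ?_, by rw [add_comm, sub_add_cancel]⟩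
  · rw [aux_qsub q v (q v • e₁), aux_qsmul, aux_psr, polar_comm (⇑q) v e₁, hpe₁v, hqe₁]; ring
  · rw [polar_sub_right, aux_psr, aux_polar_self, hpe₁v, hqe₁]; ring

end Aux

lemma edist_le_of_hom {α β : Type*} {G : SimpleGraph α} {G' : SimpleGraph β} (f : α → β)
    (hf : ∀ u v, G.Adj u v → G'.Adj (f u) (f v)) (u v : α) :
    G'.edist (f u) (f v) ≤ G.edist u v := by
  rcases eq_or_ne (G.edist u v) ⊤ with h | h
  · exact h ▸ le_top
  · obtain ⟨p, hp⟩ := SimpleGraph.exists_walk_of_edist_ne_top h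
    calc G'.edist (f u) (f v) ≤ (p.map ⟨f, fun h' => hf _ _ h'⟩).length :=
          SimpleGraph.edist_le _
      _ = p.length := by rw [SimpleGraph.Walk.length_map]
      _ = G.edist u v := hp

/-- For a non-degenerate isotropic form `q`, `diam G_{q,a} ≤ diam G_{H,a}` where `H` is
the hyperbolic plane on `F²`. -/
theorem stmt_3 {F V : Type*} [Field F] [AddCommGroup V] [Module F V] [FiniteDimensional F V]
    (q : QuadraticForm F V)
    (hnd : ∀ x : V, (∀ y : V, polar (⇑q) x y = 0) → x = 0)
    (hiso : ∃ v : V, v ≠ 0 ∧ q v = 0) (a : F) :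
    (repGraph q a).ediam ≤ (repGraph (hypPlane F) a).ediam := by
  apply SimpleGraph.ediam_le_of_edist_le
  intro x y
  rcases eq_or_ne x y with rfl | hxy
  · simp [SimpleGraph.edist_self]
  have hv : x - y ≠ 0 := sub_ne_zero.mpr hxy
  obtain ⟨e, f, hqe, hqf, hpef, hvef⟩ := exists_hyp_pair q hnd hiso hv
  have key : ∀ s t : F, q (s • e + t • f) = s * t := by
    intro s t
    rw [aux_qadd, aux_qsmul, aux_qsmul, aux_psl, aux_psr, hqe, hqf, hpef]; ring
  have hfne : f ≠ 0 := by
    intro h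
    rw [h, polar_zero_right] at hpef
    exact one_ne_zero hpef.symm
  have hinj : ∀ s t : F, s • e + t • f = 0 → s = 0 ∧ t = 0 := by
    intro s t h
    have hs : s = 0 := by
      have h2 := congrArg (fun w => polar (⇑q) w f) h
      simp only [polar_add_left, aux_psl, aux_polar_self, hpef, hqf, polar_zero_left] at h2
      simpa using h2
    refine ⟨hs, ?_⟩
    rw [hs, zero_smul, zero_add] at h
    rcases smul_eq_zero.mp h with ht | hf0
    · exact ht
    · exact absurd hf0 hfne
  set θ : F × F → V := fun p => p.1 • e + p.2 • f + y with hθ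
  have hhom : ∀ p p' : F × F, (repGraph (hypPlane F) a).Adj p p' →
      (repGraph q a).Adj (θ p) (θ p') := by
    rintro p p' ⟨hne, hval⟩
    have hdiff : θ p - θ p' = (p.1 - p'.1) • e + (p.2 - p'.2) • f := by
      simp only [hθ, sub_smul]
      abel
    constructor
    · intro heq
      have h0 : (p.1 - p'.1) • e + (p.2 - p'.2) • f = 0 := by
        rw [← hdiff, heq, sub_self]
      obtain ⟨hs, ht⟩ := hinj _ _ h0
      exact hne (Prod.ext (sub_eq_zero.mp hs) (sub_eq_zero.mp ht))
    · rw [hdiff, key]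
      rw [hypPlane_apply] at hval
      exact hval
  have h0 : θ (0, 0) = y := by simp [hθ]
  have h1 : θ (q (x - y), 1) = x := by
    simp only [hθ, one_smul]
    rw [← hvef]
    abel
  calc (repGraph q a).edist x y
      = (repGraph q a).edist (θ (q (x - y), 1)) (θ (0, 0)) := by rw [h0, h1]
    _ ≤ (repGraph (hypPlane F) a).edist (q (x - y), 1) (0, 0) :=
        edist_le_of_hom θ hhom _ _
    _ ≤ (repGraph (hypPlane F) a).ediam := SimpleGraph.edist_le_ediam
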